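/- Let δ, α be real numbers with 0 < α ≤ δ ≤ 1/4, let d be a positive integer with d ≤ log(1/δ)/4, let A ⊆ F_2^n with |A| = δN where N = 2^n, and let R_α = {r ∈ F_2^n : |Â(r)| ≥ αN}. Suppose Λ ⊆ F_2^n belongs to the family 𝚲(2 log(1/δ)). Then |d·̇Λ ∩ R_α| ≤ (δ/α)² · (2^{12} log(1/δ)/d)^d. Here log denotes the logarithm to base 2. -/

import Mathlib

open Finset

/-- `d ·̇ Λ`: the set of all sums of `d` pairwise distinct elements of `Λ`. -/
def dDot {G : Type*} [AddCommGroup G] [DecidableEq G] (d : ℕ) (Λ : Finset G) : Finset G :=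
  (Λ.powersetCard d).image fun S => ∑ x ∈ S, x

/-- The Fourier transform of (the indicator of) `A ⊆ F_2^n`:
`Â(r) = ∑_{x ∈ A} (−1)^{⟨r,x⟩}`. -/
def fourierF2 {n : ℕ} (A : Finset (Fin n → ZMod 2)) (r : Fin n → ZMod 2) : ℝ :=
  ∑ x ∈ A, (-1 : ℝ) ^ (∑ i, r i * x i : ZMod 2).val

/-- The set `R_α = { r : |Â(r)| ≥ α N }` of large Fourier coefficients. -/
noncomputable def specLarge {n : ℕ} (A : Finset (Fin n → ZMod 2)) (α : ℝ) :
    Finset (Fin n → ZMod 2) :=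
  Finset.univ.filter fun r => α * 2 ^ n ≤ |fourierF2 A r|

lemma zmod2_em (a : ZMod 2) : a = 0 ∨ a = 1 := by revert a; decide

lemma chi_add (a b : ZMod 2) :
    (-1 : ℝ) ^ (a + b).val = (-1 : ℝ) ^ a.val * (-1 : ℝ) ^ b.val := by
  have h0 : (0 : ZMod 2).val = 0 := rfl
  have h1 : (1 : ZMod 2).val = 1 := rfl
  have h2 : (1 : ZMod 2) + 1 = 0 := by decide
  rcases zmod2_em a with ha | ha <;> rcases zmod2_em b with hb | hb <;>
    subst ha <;> subst hb <;>
    simp [h0, h1, h2]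

lemma chi_one : (-1 : ℝ) ^ (1 : ZMod 2).val = -1 := by
  have h1 : (1 : ZMod 2).val = 1 := rfl
  rw [h1, pow_one]

lemma sum_chi {W : Type*} [Fintype W] [DecidableEq W] (c : W → ZMod 2) :
    ∑ y : W → ZMod 2, ((-1 : ℝ) ^ (∑ w, c w * y w).val)
      = if c = 0 then (2 : ℝ) ^ (Fintype.card W) else 0 := by
  by_cases hc : c = 0
  · subst hc
    simp only [Pi.zero_apply, zero_mul, Finset.sum_const_zero, if_pos rfl]
    simp [Finset.card_univ, Fintype.card_pi, ZMod.val_zero]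
  · rw [if_neg hc]
    obtain ⟨w₀, hw₀⟩ : ∃ w, c w ≠ 0 := by
      by_contra h; push_neg at h; exact hc (funext h)
    have hcw : c w₀ = 1 := by rcases zmod2_em (c w₀) with h | h; exact absurd h hw₀; exact h
    set σ : (W → ZMod 2) → (W → ZMod 2) := fun y => Function.update y w₀ (y w₀ + 1) with hσ
    have hinv : Function.Involutive σ := by
      intro y
      simp only [hσ, Function.update_self, Function.update_idem]
      have : y w₀ + 1 + 1 = y w₀ := by
        have h2 : (1 : ZMod 2) + 1 = 0 := by decide
        rw [add_assoc, h2, add_zero]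
      rw [this, Function.update_eq_self]
    set S := ∑ y : W → ZMod 2, ((-1 : ℝ) ^ (∑ w, c w * y w).val) with hS
    have key : ∀ y, (∑ w, c w * σ y w) = (∑ w, c w * y w) + 1 := by
      intro y
      have hfun : ∀ w, c w * σ y w = Function.update (fun w => c w * y w) w₀ (y w₀ + 1) w := by
        intro w
        by_cases hw : w = w₀
        · subst hw; simp [hσ, Function.update_self, hcw, one_mul]
        · simp [hσ, Function.update_of_ne hw]
      rw [Finset.sum_congr rfl fun w _ => hfun w, Finset.sum_update_of_mem (Finset.mem_univ w₀)]
      conv_rhs => rw [← Finset.add_sum_erase _ (fun w => c w * y w) (Finset.mem_univ w₀)]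
      rw [hcw, one_mul, Finset.sdiff_singleton_eq_erase]
      ring
    have hbij : ∑ y : W → ZMod 2, ((-1 : ℝ) ^ (∑ w, c w * σ y w).val) = S := by
      exact Fintype.sum_bijective σ hinv.bijective
        (fun y => ((-1 : ℝ) ^ (∑ w, c w * σ y w).val))
        (fun y => ((-1 : ℝ) ^ (∑ w, c w * y w).val)) (fun y => rfl)
    have hSneg : S = -S := by
      calc S = ∑ y : W → ZMod 2, ((-1 : ℝ) ^ (∑ w, c w * σ y w).val) := hbij.symm
        _ = ∑ y : W → ZMod 2, -((-1 : ℝ) ^ (∑ w, c w * y w).val) := by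
              refine Finset.sum_congr rfl fun y _ => ?_
              rw [key y, chi_add, chi_one]; ring
        _ = -S := by rw [hS, Finset.sum_neg_distrib]
    linarith

lemma choose_two_mul_le (k : ℕ) : ∀ j, j ≤ k →
    Nat.choose (2*k) (2*j) ≤ Nat.choose k j * (2*k)^j := by
  intro j
  induction j with
  | zero => simp
  | succ j ih =>
    intro hj1
    have hj : j ≤ k := le_of_lt hj1
    have IH := ih hj
    have e1 : Nat.choose (2*k) (2*j+1) * (2*j+1) = Nat.choose (2*k) (2*j) * (2*k - 2*j) :=
      Nat.choose_succ_right_eq _ _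
    have e2 : Nat.choose (2*k) (2*j+2) * (2*j+2) = Nat.choose (2*k) (2*j+1) * (2*k - (2*j+1)) := by
      have h := Nat.choose_succ_right_eq (2*k) (2*j+1)
      simpa using h
    have e3 : Nat.choose k (j+1) * (j+1) = Nat.choose k j * (k - j) :=
      Nat.choose_succ_right_eq _ _
    have hm : 0 < (2*j+1)*(2*j+2) := by positivity
    refine Nat.le_of_mul_le_mul_right ?_ hm
    have lhs_eq : Nat.choose (2*k) (2*(j+1)) * ((2*j+1)*(2*j+2))
        = Nat.choose (2*k) (2*j) * ((2*k-2*j) * (2*k - (2*j+1))) := by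
      have h2 : 2*(j+1) = 2*j+2 := by ring
      calc Nat.choose (2*k) (2*(j+1)) * ((2*j+1)*(2*j+2))
          = (Nat.choose (2*k) (2*j+2) * (2*j+2)) * (2*j+1) := by rw [h2]; ring
        _ = (Nat.choose (2*k) (2*j+1) * (2*j+1)) * (2*k - (2*j+1)) := by rw [e2]; ring
        _ = (Nat.choose (2*k) (2*j) * (2*k-2*j)) * (2*k - (2*j+1)) := by rw [e1]
        _ = _ := by ring
    rw [lhs_eq]
    have hprod : (2*k-2*j) * (2*k - (2*j+1)) ≤ (2*(k-j)) * ((2*k)*(2*j+1)) := by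
      have h1 : 2*k-2*j = 2*(k-j) := by omega
      have h2 : 2*k - (2*j+1) ≤ (2*k)*(2*j+1) := by
        calc 2*k - (2*j+1) ≤ 2*k := Nat.sub_le _ _
          _ ≤ (2*k)*(2*j+1) := Nat.le_mul_of_pos_right _ (by omega)
      rw [h1]
      exact Nat.mul_le_mul_left _ h2
    calc Nat.choose (2*k) (2*j) * ((2*k-2*j) * (2*k - (2*j+1)))
        ≤ (Nat.choose k j * (2*k)^j) * ((2*(k-j)) * ((2*k)*(2*j+1))) :=
          Nat.mul_le_mul IH hprod
      _ = (Nat.choose k j * (k-j)) * ((2*k)^j * (2*k)) * ((2*j+1) * 2) := by ring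
      _ = (Nat.choose k (j+1) * (j+1)) * ((2*k)^j * (2*k)) * ((2*j+1) * 2) := by rw [e3]
      _ = Nat.choose k (j+1) * (2*k)^(j+1) * ((2*j+1)*(2*(j+1))) := by rw [pow_succ]; ring
      _ = Nat.choose k (j+1) * (2*k)^(j+1) * ((2*j+1)*(2*j+2)) := by ring_nf


lemma add_pow_even (x y : ℝ) (k : ℕ) :
    (x+y)^(2*k) + (x-y)^(2*k)
      = 2 * ∑ j ∈ Finset.range (k+1), (Nat.choose (2*k) (2*j) : ℝ) * x^(2*k-2*j) * y^(2*j) := by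
  have key : ∀ i ∈ Finset.range (2*k+1),
      (x^i * y^(2*k-i) * (Nat.choose (2*k) i : ℝ) + x^i * (-y)^(2*k-i) * (Nat.choose (2*k) i : ℝ))
      = if Even i then 2 * (Nat.choose (2*k) i : ℝ) * x^i * y^(2*k-i) else 0 := by
    intro i hi
    rw [Finset.mem_range] at hi
    by_cases h : Even i
    · have he : Even (2*k-i) := by
        rw [Nat.even_sub (by omega)]; simp [h, Nat.even_iff, Nat.mul_mod_right]
      rw [if_pos h, he.neg_pow]; ring
    · have hi2 : i % 2 = 1 := Nat.not_even_iff.mp h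
      have ho : Odd (2*k-i) := by rw [Nat.odd_iff]; omega
      rw [if_neg h, ho.neg_pow]; ring
  rw [add_pow, sub_eq_add_neg, add_pow, ← Finset.sum_add_distrib,
    Finset.sum_congr rfl key, ← Finset.sum_filter]
  have hbij : ∑ i ∈ (Finset.range (2*k+1)).filter (fun i => Even i),
      (2 * (Nat.choose (2*k) i : ℝ) * x^i * y^(2*k-i))
      = ∑ j ∈ Finset.range (k+1), 2 * (Nat.choose (2*k) (2*j) : ℝ) * x^(2*j) * y^(2*k-2*j) := by
    refine Finset.sum_nbij' (fun i => i / 2) (fun j => 2 * j) ?_ ?_ ?_ ?_ ?_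
    · intro i hi
      simp only [Finset.mem_filter, Finset.mem_range, Nat.even_iff] at hi
      simp only [Finset.mem_range]; omega
    · intro j hj
      simp only [Finset.mem_range] at hj
      simp only [Finset.mem_filter, Finset.mem_range, Nat.even_iff]; omega
    · intro i hi
      simp only [Finset.mem_filter, Finset.mem_range, Nat.even_iff] at hi
      show 2 * (i / 2) = i; omega
    · intro j hj; show (2*j)/2 = j; omega
    · intro i hi
      simp only [Finset.mem_filter, Finset.mem_range, Nat.even_iff] at hi
      have : 2 * (i / 2) = i := by omega
      rw [this]
  rw [hbij]
  have hrefl := Finset.sum_range_reflect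
    (fun j => 2 * (Nat.choose (2*k) (2*j) : ℝ) * x^(2*j) * y^(2*k-2*j)) (k+1)
  simp only [Nat.add_sub_cancel] at hrefl
  rw [← hrefl, Finset.mul_sum]
  refine Finset.sum_congr rfl fun j hj => ?_
  rw [Finset.mem_range] at hj
  have h1 : 2*(k-j) = 2*k - 2*j := by omega
  have h2 : 2*k - (2*k - 2*j) = 2*j := by omega
  have h3 : Nat.choose (2*k) (2*k-2*j) = Nat.choose (2*k) (2*j) := Nat.choose_symm (by omega)
  rw [h1, h2, h3]; ring

lemma holder_nat {ι : Type*} (s : Finset ι) (u v : ι → ℝ) (hu : ∀ i ∈ s, 0 ≤ u i)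
    (hv : ∀ i ∈ s, 0 ≤ v i) (k j : ℕ) (hk : 0 < k) (hj : j ≤ k) :
    (∑ i ∈ s, u i ^ (k-j) * v i ^ j) ^ k
      ≤ (∑ i ∈ s, u i ^ k) ^ (k-j) * (∑ i ∈ s, v i ^ k) ^ j := by
  rcases Nat.eq_zero_or_pos j with hj0 | hj0
  · subst hj0; simp
  rcases eq_or_lt_of_le hj with hjk | hjk
  · subst hjk; simp
  -- now 0 < j < k
  set p : ℝ := (k : ℝ) / ((k : ℝ) - j) with hp
  set q : ℝ := (k : ℝ) / (j : ℝ) with hq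
  have hkj : (0:ℝ) < (k:ℝ) - j := by
    have : (j:ℝ) < k := by exact_mod_cast hjk
    linarith
  have hkpos : (0:ℝ) < k := by exact_mod_cast hk
  have hjpos : (0:ℝ) < j := by exact_mod_cast hj0
  have hpq : Real.HolderConjugate p q := by
    rw [Real.holderConjugate_iff]
    constructor
    · rw [hp, lt_div_iff₀ hkj]; linarith
    · rw [hp, hq]; field_simp; ring
  have H := Real.inner_le_Lp_mul_Lq s (fun i => u i ^ (k-j)) (fun i => v i ^ j) hpq
  have habs1 : ∀ i ∈ s, |u i ^ (k-j)| ^ p = u i ^ k := by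
    intro i hi
    rw [abs_of_nonneg (pow_nonneg (hu i hi) _), ← Real.rpow_natCast (u i) (k-j),
      ← Real.rpow_mul (hu i hi)]
    have : ((k - j : ℕ) : ℝ) * p = (k : ℕ) := by
      rw [hp, Nat.cast_sub hj]; field_simp
    rw [this, Real.rpow_natCast]
  have habs2 : ∀ i ∈ s, |v i ^ j| ^ q = v i ^ k := by
    intro i hi
    rw [abs_of_nonneg (pow_nonneg (hv i hi) _), ← Real.rpow_natCast (v i) j,
      ← Real.rpow_mul (hv i hi)]
    have : ((j : ℕ) : ℝ) * q = (k : ℕ) := by rw [hq]; field_simp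
    rw [this, Real.rpow_natCast]
  rw [Finset.sum_congr rfl habs1, Finset.sum_congr rfl habs2] at H
  have hA : (0:ℝ) ≤ ∑ i ∈ s, u i ^ k := Finset.sum_nonneg fun i hi => pow_nonneg (hu i hi) _
  have hB : (0:ℝ) ≤ ∑ i ∈ s, v i ^ k := Finset.sum_nonneg fun i hi => pow_nonneg (hv i hi) _
  have hL : (0:ℝ) ≤ ∑ i ∈ s, u i ^ (k-j) * v i ^ j :=
    Finset.sum_nonneg fun i hi => mul_nonneg (pow_nonneg (hu i hi) _) (pow_nonneg (hv i hi) _)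
  have hR : (0:ℝ) ≤ (∑ i ∈ s, u i ^ k) ^ (1/p) * (∑ i ∈ s, v i ^ k) ^ (1/q) :=
    mul_nonneg (Real.rpow_nonneg hA _) (Real.rpow_nonneg hB _)
  have Hk := pow_le_pow_left₀ hL H k
  calc (∑ i ∈ s, u i ^ (k-j) * v i ^ j) ^ k
      ≤ ((∑ i ∈ s, u i ^ k) ^ (1/p) * (∑ i ∈ s, v i ^ k) ^ (1/q)) ^ k := Hk
    _ = (∑ i ∈ s, u i ^ k) ^ (k-j) * (∑ i ∈ s, v i ^ k) ^ j := by
        rw [mul_pow, ← Real.rpow_natCast ((∑ i ∈ s, u i ^ k) ^ (1/p)) k,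
          ← Real.rpow_natCast ((∑ i ∈ s, v i ^ k) ^ (1/q)) k,
          ← Real.rpow_mul hA, ← Real.rpow_mul hB]
        have e1 : (1/p) * (k : ℝ) = ((k - j : ℕ) : ℝ) := by
          rw [hp, Nat.cast_sub hj]; field_simp
        have e2 : (1/q) * (k : ℝ) = ((j : ℕ) : ℝ) := by rw [hq]; field_simp
        rw [e1, e2, Real.rpow_natCast, Real.rpow_natCast]

noncomputable def wal {V : Type*} [DecidableEq V] (S : Finset V) (y : V → ZMod 2) : ℝ :=
  (-1 : ℝ) ^ (∑ l ∈ S, y l).val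

lemma wal_empty {V : Type*} [DecidableEq V] (y : V → ZMod 2) : wal (∅ : Finset V) y = 1 := by
  simp [wal, ZMod.val_zero]

lemma wal_insert {V : Type*} [DecidableEq V] {S : Finset V} {i : V} (hi : i ∉ S)
    (y : V → ZMod 2) : wal (insert i S) y = (-1 : ℝ) ^ (y i).val * wal S y := by
  rw [wal, wal, Finset.sum_insert hi, chi_add]

lemma wal_update {V : Type*} [DecidableEq V] {S : Finset V} {i : V} (hi : i ∉ S)
    (y : V → ZMod 2) (z : ZMod 2) : wal S (Function.update y i z) = wal S y := by
  unfold wal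
  have : ∑ l ∈ S, Function.update y i z l = ∑ l ∈ S, y l := by
    refine Finset.sum_congr rfl fun l hl => ?_
    exact Function.update_of_ne (fun h : l = i => hi (h ▸ hl)) z y
  rw [this]

lemma wal_sq {V : Type*} [DecidableEq V] (S : Finset V) (y : V → ZMod 2) :
    wal S y * wal S y = 1 := by
  unfold wal
  rw [← pow_add]
  have : (∑ l ∈ S, y l).val + (∑ l ∈ S, y l).val = 2 * (∑ l ∈ S, y l).val := by ring
  rw [this, pow_mul]
  norm_num

lemma chaos_const {V : Type*} [Fintype V] [DecidableEq V] (k : ℕ) (hk : 0 < k) (d : ℕ)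
    (a : Finset V → ℝ) (ha : ∀ S, a S ≠ 0 → S = ∅) :
    ∑ y : V → ZMod 2, (∑ S : Finset V, a S * wal S y) ^ (2*k)
      ≤ 2 ^ (Fintype.card V) * (2*k : ℝ) ^ (k*d) * (∑ S : Finset V, (a S)^2) ^ k := by
  have hpt : ∀ y : V → ZMod 2, (∑ S : Finset V, a S * wal S y) = a ∅ := by
    intro y
    rw [Finset.sum_eq_single (∅ : Finset V)]
    · rw [wal_empty, mul_one]
    · intro S _ hS
      rw [show a S = 0 from by_contra fun h => hS (ha S h), zero_mul]
    · intro h; exact absurd (Finset.mem_univ _) h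
  calc ∑ y : V → ZMod 2, (∑ S : Finset V, a S * wal S y) ^ (2*k)
      = ∑ y : V → ZMod 2, ((a ∅)^2) ^ k := by
        refine Finset.sum_congr rfl fun y _ => ?_
        rw [hpt y, ← pow_mul]
    _ = 2 ^ (Fintype.card V) * ((a ∅)^2) ^ k := by
        rw [Finset.sum_const, Finset.card_univ, nsmul_eq_mul]
        congr 1
        rw [Fintype.card_pi]
        push_cast
        simp [ZMod.card]
    _ ≤ 2 ^ (Fintype.card V) * (2*k : ℝ) ^ (k*d) * (∑ S : Finset V, (a S)^2) ^ k := by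
        rw [mul_assoc]
        refine mul_le_mul_of_nonneg_left ?_ (by positivity)
        have h1 : ((a ∅)^2) ^ k ≤ (∑ S : Finset V, (a S)^2) ^ k := by
          refine pow_le_pow_left₀ (sq_nonneg _) ?_ k
          exact Finset.single_le_sum (fun S _ => sq_nonneg (a S)) (Finset.mem_univ _)
        calc ((a ∅)^2) ^ k ≤ (∑ S : Finset V, (a S)^2) ^ k := h1
          _ ≤ (2*k : ℝ) ^ (k*d) * (∑ S : Finset V, (a S)^2) ^ k := by
              refine le_mul_of_one_le_left (by positivity) ?_
              refine one_le_pow₀ ?_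
              have : (1:ℝ) ≤ (k:ℝ) := by exact_mod_cast hk
              linarith

lemma flip_involutive {V : Type*} [DecidableEq V] (i : V) :
    Function.Involutive (fun y : V → ZMod 2 => Function.update y i (y i + 1)) := by
  intro y
  simp only [Function.update_self, Function.update_idem]
  have h2 : (1 : ZMod 2) + 1 = 0 := by decide
  have : y i + 1 + 1 = y i := by rw [add_assoc, h2, add_zero]
  rw [this, Function.update_eq_self]

lemma chaos {V : Type*} [Fintype V] [DecidableEq V] (k : ℕ) (hk : 0 < k) (s : Finset V) :
    ∀ (d : ℕ) (a : Finset V → ℝ), (∀ S, a S ≠ 0 → S ⊆ s ∧ S.card ≤ d) →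
    ∑ y : V → ZMod 2, (∑ S : Finset V, a S * wal S y) ^ (2*k)
      ≤ 2 ^ (Fintype.card V) * (2*(k:ℝ)) ^ (k*d) * (∑ S : Finset V, (a S)^2) ^ k := by
  induction s using Finset.induction_on with
  | empty =>
    intro d a ha
    exact chaos_const k hk d a (fun S hS => Finset.subset_empty.mp (ha S hS).1)
  | @insert i s hi ih =>
    intro d a ha
    rcases Nat.eq_zero_or_pos d with hd0 | hd0
    · subst hd0
      exact chaos_const k hk 0 a
        (fun S hS => Finset.card_eq_zero.mp (Nat.le_zero.mp (ha S hS).2))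
    set a₀ : Finset V → ℝ := fun S => if i ∈ S then 0 else a S with ha₀def
    set b : Finset V → ℝ := fun S => if i ∈ S then 0 else a (insert i S) with hbdef
    set g : (V → ZMod 2) → ℝ := fun y => ∑ S : Finset V, a₀ S * wal S y with hgdef
    set h : (V → ZMod 2) → ℝ := fun y => ∑ S : Finset V, b S * wal S y with hhdef
    -- support conditions
    have ha₀supp : ∀ S, a₀ S ≠ 0 → S ⊆ s ∧ S.card ≤ d := by
      intro S hS
      by_cases him : i ∈ S
      · exact absurd (by simp [ha₀def, him]) hS
      · rw [ha₀def] at hS; simp only [if_neg him] at hS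
        obtain ⟨h1, h2⟩ := ha S hS
        refine ⟨fun x hx => ?_, h2⟩
        rcases Finset.mem_insert.mp (h1 hx) with rfl | hxs
        · exact absurd hx him
        · exact hxs
    have hbsupp : ∀ S, b S ≠ 0 → S ⊆ s ∧ S.card ≤ d - 1 := by
      intro S hS
      by_cases him : i ∈ S
      · exact absurd (by simp [hbdef, him]) hS
      · rw [hbdef] at hS; simp only [if_neg him] at hS
        obtain ⟨h1, h2⟩ := ha _ hS
        have hsub : S ⊆ s := by
          intro x hx
          rcases Finset.mem_insert.mp (h1 (Finset.mem_insert_of_mem hx)) with rfl | hxs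
          · exact absurd hx him
          · exact hxs
        have hcard : S.card + 1 ≤ d := by
          rw [← Finset.card_insert_of_notMem him]; exact h2
        exact ⟨hsub, by omega⟩
    -- filtered expressions
    have hgeq : ∀ y, g y = ∑ S ∈ Finset.univ.filter (fun S : Finset V => ¬ i ∈ S),
        a S * wal S y := by
      intro y
      rw [hgdef, Finset.sum_filter]
      refine Finset.sum_congr rfl fun S _ => ?_
      by_cases him : i ∈ S <;> simp [ha₀def, him]
    have hheq : ∀ y, h y = ∑ S ∈ Finset.univ.filter (fun S : Finset V => ¬ i ∈ S),
        a (insert i S) * wal S y := by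
      intro y
      rw [hhdef, Finset.sum_filter]
      refine Finset.sum_congr rfl fun S _ => ?_
      by_cases him : i ∈ S <;> simp [hbdef, him]
    -- decomposition
    have hdec : ∀ y, (∑ S : Finset V, a S * wal S y)
        = g y + (-1:ℝ)^(y i).val * h y := by
      intro y
      rw [← Finset.sum_filter_add_sum_filter_not Finset.univ (fun S : Finset V => i ∈ S)
        (fun S => a S * wal S y)]
      have hfirst : ∑ S ∈ Finset.univ.filter (fun S : Finset V => i ∈ S), a S * wal S y
          = (-1:ℝ)^(y i).val * ∑ S ∈ Finset.univ.filter (fun S : Finset V => ¬ i ∈ S),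
              a (insert i S) * wal S y := by
        rw [Finset.mul_sum]
        refine Finset.sum_nbij' (fun S => S.erase i) (fun S => insert i S) ?_ ?_ ?_ ?_ ?_
        · intro S hS
          simp only [Finset.mem_filter, Finset.mem_univ, true_and] at *
          exact Finset.notMem_erase i S
        · intro S hS
          simp only [Finset.mem_filter, Finset.mem_univ, true_and] at *
          exact Finset.mem_insert_self i S
        · intro S hS
          simp only [Finset.mem_filter, Finset.mem_univ, true_and] at hS
          exact Finset.insert_erase hS
        · intro S hS
          simp only [Finset.mem_filter, Finset.mem_univ, true_and] at hS
          exact Finset.erase_insert hS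
        · intro S hS
          simp only [Finset.mem_filter, Finset.mem_univ, true_and] at hS
          conv_lhs => rw [← Finset.insert_erase hS]
          rw [wal_insert (Finset.notMem_erase i S)]
          ring
      rw [hfirst, hgeq y, hheq y]
      ring
    -- invariance under updating coordinate i
    have hgupd : ∀ y z, g (Function.update y i z) = g y := by
      intro y z
      rw [hgeq, hgeq]
      refine Finset.sum_congr rfl fun S hS => ?_
      simp only [Finset.mem_filter, Finset.mem_univ, true_and] at hS
      rw [wal_update hS]
    have hhupd : ∀ y z, h (Function.update y i z) = h y := by
      intro y z
      rw [hheq, hheq]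
      refine Finset.sum_congr rfl fun S hS => ?_
      simp only [Finset.mem_filter, Finset.mem_univ, true_and] at hS
      rw [wal_update hS]
    -- pairing
    have hpair : 2 * ∑ y : V → ZMod 2, (∑ S : Finset V, a S * wal S y) ^ (2*k)
        = ∑ y : V → ZMod 2, ((g y + h y)^(2*k) + (g y - h y)^(2*k)) := by
      set σ : (V → ZMod 2) → (V → ZMod 2) := fun y => Function.update y i (y i + 1) with hσ
      have hbij : ∑ y : V → ZMod 2, (∑ S : Finset V, a S * wal S (σ y)) ^ (2*k)
          = ∑ y : V → ZMod 2, (∑ S : Finset V, a S * wal S y) ^ (2*k) :=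
        Fintype.sum_bijective σ (flip_involutive i).bijective _ _ (fun y => rfl)
      rw [two_mul]
      nth_rewrite 1 [← hbij]
      rw [← Finset.sum_add_distrib]
      refine Finset.sum_congr rfl fun y _ => ?_
      have hFy : (∑ S : Finset V, a S * wal S y) = g y + (-1:ℝ)^(y i).val * h y := hdec y
      have hFσ : (∑ S : Finset V, a S * wal S (σ y))
          = g y - (-1:ℝ)^(y i).val * h y := by
        rw [hdec (σ y)]
        have h1 : g (σ y) = g y := hgupd y (y i + 1)
        have h2 : h (σ y) = h y := hhupd y (y i + 1)
        have h3 : (σ y) i = y i + 1 := Function.update_self i (y i + 1) y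
        rw [h1, h2, h3, chi_add, chi_one]
        ring
      rw [hFy, hFσ]
      rcases zmod2_em (y i) with h0 | h0 <;> rw [h0]
      · have : ((0:ZMod 2)).val = 0 := rfl
        rw [this, pow_zero]
        ring_nf
      · rw [chi_one]
        ring_nf
    -- expand and swap sums
    have hexp : ∑ y : V → ZMod 2, ((g y + h y)^(2*k) + (g y - h y)^(2*k))
        = 2 * ∑ j ∈ Finset.range (k+1), (Nat.choose (2*k) (2*j) : ℝ) *
            ∑ y : V → ZMod 2, (g y)^(2*k-2*j) * (h y)^(2*j) := by
      rw [Finset.sum_congr rfl fun y _ => add_pow_even (g y) (h y) k, ← Finset.mul_sum]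
      congr 1
      rw [Finset.sum_comm]
      refine Finset.sum_congr rfl fun j _ => ?_
      rw [Finset.mul_sum]
      exact Finset.sum_congr rfl fun y _ => by ring
    set A := ∑ y : V → ZMod 2, (g y)^(2*k) with hAdef
    set B := ∑ y : V → ZMod 2, (h y)^(2*k) with hBdef
    set asq := ∑ S : Finset V, (a₀ S)^2 with hasqdef
    set bsq := ∑ S : Finset V, (b S)^2 with hbsqdef
    have hasqnn : (0:ℝ) ≤ asq := Finset.sum_nonneg fun S _ => sq_nonneg _
    have hbsqnn : (0:ℝ) ≤ bsq := Finset.sum_nonneg fun S _ => sq_nonneg _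
    have hAnn : (0:ℝ) ≤ A :=
      Finset.sum_nonneg fun y _ => by rw [pow_mul]; exact pow_nonneg (sq_nonneg _) _
    have hBnn : (0:ℝ) ≤ B :=
      Finset.sum_nonneg fun y _ => by rw [pow_mul]; exact pow_nonneg (sq_nonneg _) _
    have hAbound : A ≤ 2 ^ (Fintype.card V) * (2*(k:ℝ)) ^ (k*d) * asq^k := ih d a₀ ha₀supp
    have hBbound : B ≤ 2 ^ (Fintype.card V) * (2*(k:ℝ)) ^ (k*(d-1)) * bsq^k :=
      ih (d-1) b hbsupp
    have hd1 : 1 ≤ d := hd0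
    -- bound each mixed moment
    have hSj : ∀ j ∈ Finset.range (k+1),
        ∑ y : V → ZMod 2, (g y)^(2*k-2*j) * (h y)^(2*j)
          ≤ 2 ^ (Fintype.card V) * (2*(k:ℝ)) ^ (k*d-j) * asq^(k-j) * bsq^j := by
      intro j hj
      have hjk : j ≤ k := by rw [Finset.mem_range] at hj; omega
      have hjkd : j ≤ k*d := le_trans hjk (Nat.le_mul_of_pos_right k hd0)
      have hH := holder_nat Finset.univ (fun y => (g y)^2) (fun y => (h y)^2)
        (fun y _ => sq_nonneg _) (fun y _ => sq_nonneg _) k j hk hjk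
      have e1 : (∑ y : V → ZMod 2, ((g y)^2)^(k-j) * ((h y)^2)^j)
          = ∑ y : V → ZMod 2, (g y)^(2*k-2*j) * (h y)^(2*j) :=
        Finset.sum_congr rfl fun y _ => by
          rw [← pow_mul, ← pow_mul]
          congr 2
          omega
      have e3 : (∑ y : V → ZMod 2, ((g y)^2)^k) = A :=
        Finset.sum_congr rfl fun y _ => by rw [← pow_mul]
      have e4 : (∑ y : V → ZMod 2, ((h y)^2)^k) = B :=
        Finset.sum_congr rfl fun y _ => by rw [← pow_mul]
      rw [e1, e3, e4] at hH
      set X := (2:ℝ) ^ (Fintype.card V) with hXdef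
      have hXnn : (0:ℝ) ≤ X := by positivity
      set K := 2*(k:ℝ) with hKdef
      have hKnn : (0:ℝ) ≤ K := by positivity
      have hRnn : (0:ℝ) ≤ X * K^(k*d-j) * asq^(k-j) * bsq^j := by
        refine mul_nonneg (mul_nonneg (mul_nonneg hXnn (pow_nonneg hKnn _)) ?_) ?_
        · exact pow_nonneg hasqnn _
        · exact pow_nonneg hbsqnn _
      refine le_of_pow_le_pow_left₀ (Nat.pos_iff_ne_zero.mp hk) hRnn ?_
      refine le_trans hH ?_
      have step1 : A^(k-j) * B^j
          ≤ (X * K^(k*d) * asq^k)^(k-j) * (X * K^(k*(d-1)) * bsq^k)^j := by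
        refine mul_le_mul (pow_le_pow_left₀ hAnn hAbound _) (pow_le_pow_left₀ hBnn hBbound _)
          (pow_nonneg hBnn _) (pow_nonneg ?_ _)
        refine mul_nonneg (mul_nonneg hXnn (pow_nonneg hKnn _)) (pow_nonneg hasqnn _)
      refine le_trans step1 (le_of_eq ?_)
      have E1 : k - j + j = k := Nat.sub_add_cancel hjk
      have E2 : k*d*(k-j) + k*(d-1)*j = (k*d-j)*k := by zify [hjk, hd1, hjkd]; ring
      have regroup : (X * K^(k*d) * asq^k)^(k-j) * (X * K^(k*(d-1)) * bsq^k)^j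
          = X^(k-j+j) * K^(k*d*(k-j) + k*(d-1)*j) * asq^((k-j)*k) * bsq^(j*k) := by
        rw [pow_add, pow_add]
        ring
      rw [regroup, E1, E2]
      ring
    -- sum of squares splits
    have hsum_split : asq + bsq = ∑ S : Finset V, (a S)^2 := by
      have h1 : asq = ∑ S ∈ Finset.univ.filter (fun S : Finset V => ¬ i ∈ S), (a S)^2 := by
        rw [hasqdef, Finset.sum_filter]
        refine Finset.sum_congr rfl fun S _ => ?_
        by_cases him : i ∈ S <;> simp [ha₀def, him]
      have h2 : bsq = ∑ S ∈ Finset.univ.filter (fun S : Finset V => i ∈ S), (a S)^2 := by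
        have h2a : bsq = ∑ S ∈ Finset.univ.filter (fun S : Finset V => ¬ i ∈ S),
            (a (insert i S))^2 := by
          rw [hbsqdef, Finset.sum_filter]
          refine Finset.sum_congr rfl fun S _ => ?_
          by_cases him : i ∈ S <;> simp [hbdef, him]
        rw [h2a]
        refine Finset.sum_nbij' (fun S => insert i S) (fun S => S.erase i) ?_ ?_ ?_ ?_ ?_
        · intro S hS
          simp only [Finset.mem_filter, Finset.mem_univ, true_and] at *
          exact Finset.mem_insert_self i S
        · intro S hS
          simp only [Finset.mem_filter, Finset.mem_univ, true_and] at *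
          exact Finset.notMem_erase i S
        · intro S hS
          simp only [Finset.mem_filter, Finset.mem_univ, true_and] at hS
          exact Finset.erase_insert hS
        · intro S hS
          simp only [Finset.mem_filter, Finset.mem_univ, true_and] at hS
          exact Finset.insert_erase hS
        · intro S hS
          rfl
      rw [h1, h2, add_comm, Finset.sum_filter_add_sum_filter_not]
    -- put everything together
    have hFeq : ∑ y : V → ZMod 2, (∑ S : Finset V, a S * wal S y) ^ (2*k)
        = ∑ j ∈ Finset.range (k+1), (Nat.choose (2*k) (2*j) : ℝ) *
            ∑ y : V → ZMod 2, (g y)^(2*k-2*j) * (h y)^(2*j) :=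
      mul_left_cancel₀ two_ne_zero (hpair.trans hexp)
    rw [hFeq, ← hsum_split]
    calc ∑ j ∈ Finset.range (k+1), (Nat.choose (2*k) (2*j) : ℝ) *
            ∑ y : V → ZMod 2, (g y)^(2*k-2*j) * (h y)^(2*j)
        ≤ ∑ j ∈ Finset.range (k+1), 2 ^ (Fintype.card V) * (2*(k:ℝ)) ^ (k*d) *
            ((Nat.choose k j : ℝ) * asq^(k-j) * bsq^j) := by
          refine Finset.sum_le_sum fun j hj => ?_
          have hjk : j ≤ k := by rw [Finset.mem_range] at hj; omega
          have hjkd : j ≤ k*d := le_trans hjk (Nat.le_mul_of_pos_right k hd0)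
          have step := hSj j hj
          have hCnn : (0:ℝ) ≤ (Nat.choose (2*k) (2*j) : ℝ) := Nat.cast_nonneg _
          have step2 : (Nat.choose (2*k) (2*j) : ℝ) *
              (∑ y : V → ZMod 2, (g y)^(2*k-2*j) * (h y)^(2*j))
              ≤ (Nat.choose (2*k) (2*j) : ℝ) *
                (2 ^ (Fintype.card V) * (2*(k:ℝ)) ^ (k*d-j) * asq^(k-j) * bsq^j) :=
            mul_le_mul_of_nonneg_left step hCnn
          refine le_trans step2 ?_
          have hc : (Nat.choose (2*k) (2*j) : ℝ) ≤ (Nat.choose k j : ℝ) * (2*(k:ℝ))^j := by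
            have := choose_two_mul_le k j hjk
            have hcast : ((Nat.choose k j * (2*k)^j : ℕ) : ℝ)
                = (Nat.choose k j : ℝ) * (2*(k:ℝ))^j := by push_cast; ring
            calc (Nat.choose (2*k) (2*j) : ℝ) ≤ ((Nat.choose k j * (2*k)^j : ℕ) : ℝ) := by
                  exact_mod_cast this
              _ = _ := hcast
          have hrhs_nn : (0:ℝ) ≤ 2 ^ (Fintype.card V) * (2*(k:ℝ)) ^ (k*d-j) * asq^(k-j) * bsq^j := by
            have : (0:ℝ) ≤ (2*(k:ℝ)) := by positivity
            refine mul_nonneg (mul_nonneg (mul_nonneg (by positivity) (pow_nonneg this _))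
              (pow_nonneg hasqnn _)) (pow_nonneg hbsqnn _)
          calc (Nat.choose (2*k) (2*j) : ℝ) *
                (2 ^ (Fintype.card V) * (2*(k:ℝ)) ^ (k*d-j) * asq^(k-j) * bsq^j)
              ≤ ((Nat.choose k j : ℝ) * (2*(k:ℝ))^j) *
                (2 ^ (Fintype.card V) * (2*(k:ℝ)) ^ (k*d-j) * asq^(k-j) * bsq^j) :=
                mul_le_mul_of_nonneg_right hc hrhs_nn
            _ = 2 ^ (Fintype.card V) * ((2*(k:ℝ))^j * (2*(k:ℝ))^(k*d-j)) *
                ((Nat.choose k j : ℝ) * asq^(k-j) * bsq^j) := by ring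
            _ = 2 ^ (Fintype.card V) * (2*(k:ℝ)) ^ (k*d) *
                ((Nat.choose k j : ℝ) * asq^(k-j) * bsq^j) := by
                rw [← pow_add, Nat.add_sub_cancel' hjkd]
      _ = 2 ^ (Fintype.card V) * (2*(k:ℝ)) ^ (k*d) *
            ∑ j ∈ Finset.range (k+1), (Nat.choose k j : ℝ) * asq^(k-j) * bsq^j := by
          rw [Finset.mul_sum]
      _ = 2 ^ (Fintype.card V) * (2*(k:ℝ)) ^ (k*d) * (asq + bsq) ^ k := by
          congr 1
          rw [add_comm asq bsq, add_pow]
          exact Finset.sum_congr rfl fun j _ => by ring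


lemma wal_rfl {V : Type*} [DecidableEq V] (S : Finset V) (y : V → ZMod 2) :
  wal S y = (-1 : ℝ) ^ (∑ l ∈ S, y l).val := rfl

lemma chi_vec_prod {ι W : Type*} [Fintype W] (u : Finset ι) (c : ι → W → ZMod 2)
    (y : W → ZMod 2) :
    ∏ i ∈ u, (-1:ℝ)^((∑ w, c i w * y w).val)
      = (-1:ℝ)^((∑ w, (∑ i ∈ u, c i w) * y w).val) := by
  induction u using Finset.cons_induction with
  | empty => simp [ZMod.val_zero]
  | cons a u ha ih =>
    rw [Finset.prod_cons, ih]
    have : ∀ w, (∑ i ∈ Finset.cons a u ha, c i w) * y w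
        = c a w * y w + (∑ i ∈ u, c i w) * y w := by
      intro w; rw [Finset.sum_cons, add_mul]
    rw [Finset.sum_congr rfl fun w _ => this w, Finset.sum_add_distrib, chi_add]

lemma wal_eq_chi {V : Type*} [Fintype V] [DecidableEq V] (S : Finset V) (y : V → ZMod 2) :
    wal S y = (-1:ℝ)^((∑ l, (if l ∈ S then (1:ZMod 2) else 0) * y l).val) := by
  rw [wal_rfl]
  congr 2
  rw [Finset.sum_congr rfl fun l (_ : l ∈ Finset.univ) => boole_mul (l ∈ S) (y l),
    Finset.sum_ite_mem, Finset.univ_inter]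

lemma expand_moment {G' W : Type*} [Fintype G'] [DecidableEq G'] [Fintype W] [DecidableEq W]
    (m : ℕ) (T : Finset G') (σ : G' → ℝ) (v : G' → W → ZMod 2) :
    ∑ z : W → ZMod 2, (∑ r ∈ T, σ r * (-1:ℝ)^((∑ w, v r w * z w).val))^m
      = ∑ c ∈ Fintype.piFinset (fun _ : Fin m => T),
          (∏ i, σ (c i)) *
            (if (fun w => ∑ i, v (c i) w) = 0 then (2:ℝ)^(Fintype.card W) else 0) := by
  have step1 : ∀ z : W → ZMod 2,
      (∑ r ∈ T, σ r * (-1:ℝ)^((∑ w, v r w * z w).val))^m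
        = ∑ c ∈ Fintype.piFinset (fun _ : Fin m => T),
            ∏ i, (σ (c i) * (-1:ℝ)^((∑ w, v (c i) w * z w).val)) := by
    intro z
    rw [show (∑ r ∈ T, σ r * (-1:ℝ)^((∑ w, v r w * z w).val))^m
        = ∏ _i : Fin m, (∑ r ∈ T, σ r * (-1:ℝ)^((∑ w, v r w * z w).val)) from by
      rw [Finset.prod_const, Finset.card_univ, Fintype.card_fin]]
    exact Finset.prod_univ_sum _ _
  rw [Finset.sum_congr rfl fun z _ => step1 z, Finset.sum_comm]
  refine Finset.sum_congr rfl fun c _ => ?_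
  have step2 : ∀ z : W → ZMod 2,
      ∏ i, (σ (c i) * (-1:ℝ)^((∑ w, v (c i) w * z w).val))
        = (∏ i, σ (c i)) * (-1:ℝ)^((∑ w, (∑ i, v (c i) w) * z w).val) := by
    intro z
    rw [Finset.prod_mul_distrib, chi_vec_prod]
  rw [Finset.sum_congr rfl fun z _ => step2 z, ← Finset.mul_sum]
  congr 1
  exact sum_chi _

set_option maxHeartbeats 1000000 in
theorem stmt5 {n : ℕ} (δ α : ℝ) (hα : 0 < α) (hαδ : α ≤ δ) (hδ : δ ≤ 1 / 4)
    (d : ℕ) (hd : 1 ≤ d) (hd2 : (d : ℝ) ≤ Real.logb 2 (1 / δ) / 4)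
    (A : Finset (Fin n → ZMod 2)) (hA : (A.card : ℝ) = δ * 2 ^ n)
    (Λ : Finset (Fin n → ZMod 2))
    (hΛ : ∀ S ⊆ Λ, S.Nonempty → (S.card : ℝ) ≤ 2 * Real.logb 2 (1 / δ) →
      ∑ x ∈ S, x ≠ 0) :
    (((dDot d Λ) ∩ specLarge A α).card : ℝ) ≤
      (δ / α) ^ 2 * (2 ^ 12 * Real.logb 2 (1 / δ) / d) ^ d := by
  have hδpos : 0 < δ := lt_of_lt_of_le hα hαδ
  set L := Real.logb 2 (1 / δ) with hLdef
  have hdpos : (0:ℝ) < d := by exact_mod_cast hd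
  have hL4d : 4*(d:ℝ) ≤ L := by linarith [hd2]
  have hLpos : 0 < L := lt_of_lt_of_le (by positivity) hL4d
  set k := ⌊L/(d:ℝ)⌋₊ with hkdef
  have hk4 : 4 ≤ k := by
    refine Nat.le_floor ?_
    rw [le_div_iff₀ hdpos]
    push_cast
    linarith
  have hkpos : 0 < k := lt_of_lt_of_le (by norm_num) hk4
  have hkreal : (k:ℝ) ≤ L/d := Nat.floor_le (by positivity)
  have hkd : (k:ℝ)*(d:ℝ) ≤ L := by
    rw [← le_div_iff₀ hdpos]
    exact hkreal
  have hLk : L ≤ 2*(d:ℝ)*(k:ℝ) := by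
    have h1 : L/(d:ℝ) < k + 1 := Nat.lt_floor_add_one _
    have h2 : (1:ℝ) ≤ k := by exact_mod_cast hkpos
    have h3 : L/(d:ℝ) < 2*k := by linarith
    rw [div_lt_iff₀ hdpos] at h3
    nlinarith
  have hδ4 : 1/δ ≤ (4:ℝ)^(d*k) := by
    have h0 : (2:ℝ) ^ (L : ℝ) = 1/δ :=
      Real.rpow_logb (by norm_num) (by norm_num) (by positivity)
    have h1 : (2:ℝ) ^ (L:ℝ) ≤ (2:ℝ) ^ (((2*(d*k):ℕ):ℝ)) := by
      refine Real.rpow_le_rpow_of_exponent_le (by norm_num) ?_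
      push_cast
      nlinarith [hLk]
    rw [h0, Real.rpow_natCast] at h1
    calc 1/δ ≤ (2:ℝ)^(2*(d*k)) := h1
      _ = (4:ℝ)^(d*k) := by rw [pow_mul]; norm_num
  set T := (dDot d Λ) ∩ specLarge A α with hTdef
  -- trivial case
  rcases Finset.eq_empty_or_nonempty T with hTe | hTne
  · rw [hTe]
    simp only [Finset.card_empty, Nat.cast_zero]
    have h1 : (0:ℝ) ≤ 2^12 * L / d := by positivity
    positivity
  have htpos : (0:ℝ) < T.card := by
    have := Finset.card_pos.mpr hTne
    exact_mod_cast this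
  -- representation choice
  have hrep : ∀ r : Fin n → ZMod 2, ∃ S : Finset (Fin n → ZMod 2),
      r ∈ T → (S ⊆ Λ ∧ S.card = d ∧ ∑ x ∈ S, x = r) := by
    intro r
    by_cases hr : r ∈ T
    · have hrd : r ∈ dDot d Λ := (Finset.mem_inter.mp hr).1
      rw [dDot, Finset.mem_image] at hrd
      obtain ⟨S, hS, hsum⟩ := hrd
      rw [Finset.mem_powersetCard] at hS
      exact ⟨S, fun _ => ⟨hS.1, hS.2, hsum⟩⟩
    · exact ⟨∅, fun h => absurd h hr⟩
  choose Srep hSrep using hrep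
  set σ : (Fin n → ZMod 2) → ℝ := fun r => if fourierF2 A r < 0 then -1 else 1 with hσdef
  have hσ1 : ∀ r, σ r = 1 ∨ σ r = -1 := by
    intro r
    simp only [hσdef]
    by_cases hr : fourierF2 A r < 0
    · right; rw [if_pos hr]
    · left; rw [if_neg hr]
  have hσabs : ∀ r ∈ T, σ r * fourierF2 A r = |fourierF2 A r| := by
    intro r _
    simp only [hσdef]
    by_cases hneg : fourierF2 A r < 0
    · rw [if_pos hneg, abs_of_neg hneg]; ring
    · rw [if_neg hneg, abs_of_nonneg (not_lt.mp hneg), one_mul]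
  set f : (Fin n → ZMod 2) → ℝ :=
    fun x => ∑ r ∈ T, σ r * (-1:ℝ)^((∑ i, r i * x i).val) with hfdef
  have hNpos : (0:ℝ) < 2^n := by positivity
  -- lower bound
  have hlow : α * 2^n * T.card ≤ ∑ x ∈ A, f x := by
    have hswap : ∑ x ∈ A, f x = ∑ r ∈ T, σ r * fourierF2 A r := by
      rw [hfdef, Finset.sum_comm]
      refine Finset.sum_congr rfl fun r _ => ?_
      rw [fourierF2, Finset.mul_sum]
    rw [hswap, Finset.sum_congr rfl hσabs]
    calc α * 2^n * T.card = ∑ _r ∈ T, α * 2^n := by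
          rw [Finset.sum_const, nsmul_eq_mul]; ring
      _ ≤ ∑ r ∈ T, |fourierF2 A r| := by
          refine Finset.sum_le_sum fun r hr => ?_
          have := (Finset.mem_inter.mp hr).2
          rw [specLarge, Finset.mem_filter] at this
          exact this.2
  -- moment bound
  have hmoment : ∑ x : Fin n → ZMod 2, (f x)^(2*k)
      ≤ 2^n * (2*(k:ℝ))^(k*d) * (T.card:ℝ)^k := by
    classical
    set a : Finset (Fin n → ZMod 2) → ℝ :=
      fun S => ∑ r ∈ T, (if Srep r = S then σ r else 0) with hadef
    have hSrep_inj : ∀ r ∈ T, ∀ r' ∈ T, Srep r = Srep r' → r = r' := by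
      intro r hr r' hr' he
      rw [← (hSrep r hr).2.2, ← (hSrep r' hr').2.2, he]
    have hasupp : ∀ S, a S ≠ 0 → S ⊆ Λ ∧ S.card ≤ d := by
      intro S hS
      have hex : ∃ r ∈ T, Srep r = S := by
        by_contra hno
        push_neg at hno
        refine hS ?_
        simp only [hadef]
        exact Finset.sum_eq_zero fun r hr => if_neg (hno r hr)
      obtain ⟨r, hr, hrS⟩ := hex
      obtain ⟨h1, h2, _⟩ := hSrep r hr
      rw [← hrS]
      exact ⟨h1, le_of_eq h2⟩
    have ha_at : ∀ r ∈ T, a (Srep r) = σ r := by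
      intro r hr
      simp only [hadef]
      rw [Finset.sum_eq_single r]
      · rw [if_pos rfl]
      · intro r' hr' hne
        exact if_neg fun he => hne (hSrep_inj r' hr' r hr he)
      · intro habs; exact absurd hr habs
    have haF : ∀ y : (Fin n → ZMod 2) → ZMod 2,
        (∑ S : Finset (Fin n → ZMod 2), a S * wal S y)
          = ∑ r ∈ T, σ r * wal (Srep r) y := by
      intro y
      calc ∑ S : Finset (Fin n → ZMod 2), a S * wal S y
          = ∑ S : Finset (Fin n → ZMod 2), ∑ r ∈ T,
              (if Srep r = S then σ r * wal S y else 0) := by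
            refine Finset.sum_congr rfl fun S _ => ?_
            simp only [hadef]
            rw [Finset.sum_mul]
            exact Finset.sum_congr rfl fun r _ => by rw [ite_mul, zero_mul]
        _ = ∑ r ∈ T, ∑ S : Finset (Fin n → ZMod 2),
              (if Srep r = S then σ r * wal S y else 0) := Finset.sum_comm
        _ = ∑ r ∈ T, σ r * wal (Srep r) y := by
            refine Finset.sum_congr rfl fun r _ => ?_
            rw [Finset.sum_ite_eq, if_pos (Finset.mem_univ _)]
    have hasq : (∑ S : Finset (Fin n → ZMod 2), (a S)^2) = (T.card:ℝ) := by
      calc ∑ S : Finset (Fin n → ZMod 2), (a S)^2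
          = ∑ S : Finset (Fin n → ZMod 2),
              (∑ r ∈ T, (if Srep r = S then σ r else 0)) * a S := by
            exact Finset.sum_congr rfl fun S _ => by rw [sq]
        _ = ∑ S : Finset (Fin n → ZMod 2), ∑ r ∈ T,
              (if Srep r = S then σ r * a S else 0) := by
            refine Finset.sum_congr rfl fun S _ => ?_
            rw [Finset.sum_mul]
            exact Finset.sum_congr rfl fun r _ => by rw [ite_mul, zero_mul]
        _ = ∑ r ∈ T, ∑ S : Finset (Fin n → ZMod 2),
              (if Srep r = S then σ r * a S else 0) := Finset.sum_comm
        _ = ∑ r ∈ T, σ r * a (Srep r) := by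
            refine Finset.sum_congr rfl fun r _ => ?_
            rw [Finset.sum_ite_eq, if_pos (Finset.mem_univ _)]
        _ = ∑ _r ∈ T, (1:ℝ) := by
            refine Finset.sum_congr rfl fun r hr => ?_
            rw [ha_at r hr]
            rcases hσ1 r with hh | hh <;> rw [hh] <;> norm_num
        _ = (T.card:ℝ) := by rw [Finset.sum_const, nsmul_eq_mul, mul_one]
    have hchaos := chaos k hkpos Λ d a hasupp
    rw [hasq] at hchaos
    have hchaos' : ∑ y : (Fin n → ZMod 2) → ZMod 2,
        (∑ r ∈ T, σ r * wal (Srep r) y)^(2*k)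
        ≤ 2^(Fintype.card (Fin n → ZMod 2)) * (2*(k:ℝ))^(k*d) * (T.card:ℝ)^k := by
      refine le_trans (le_of_eq ?_) hchaos
      refine Finset.sum_congr rfl fun y _ => ?_
      rw [haF y]
    have hcT' : ∀ c ∈ Fintype.piFinset (fun _ : Fin (2*k) => T), ∀ i, c i ∈ T := by
      intro c hc i
      rw [Fintype.mem_piFinset] at hc
      exact hc i
    have hiff : ∀ c ∈ Fintype.piFinset (fun _ : Fin (2*k) => T),
        (((fun w => ∑ i, (c i) w) = (0 : Fin n → ZMod 2)) ↔
         ((fun l => ∑ i, (if l ∈ Srep (c i) then (1:ZMod 2) else 0))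
            = (0 : (Fin n → ZMod 2) → ZMod 2))) := by
      intro c hc
      have hcT : ∀ i, c i ∈ T := hcT' c hc
      set nl : (Fin n → ZMod 2) → ℕ :=
        fun l => (Finset.univ.filter (fun i : Fin (2*k) => l ∈ Srep (c i))).card with hnldef
      have hμ : ∀ l, (∑ i, (if l ∈ Srep (c i) then (1:ZMod 2) else 0))
          = ((nl l : ℕ) : ZMod 2) := by
        intro l
        simp only [hnldef]
        exact Finset.sum_boole _ _
      have h2l : ∀ l : Fin n → ZMod 2, l + l = 0 := by
        intro l
        funext w
        show l w + l w = 0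
        rcases zmod2_em (l w) with hh | hh <;> rw [hh] <;> decide
      have heven_smul : ∀ (m : ℕ) (l : Fin n → ZMod 2), Even m → m • l = 0 := by
        intro m l hm
        obtain ⟨p, hp⟩ := hm
        rw [hp, add_nsmul]
        exact h2l (p • l)
      have hsum_repr : ∑ i, c i = ∑ l ∈ Λ, nl l • l := by
        calc ∑ i, c i = ∑ i : Fin (2*k), ∑ x ∈ Srep (c i), x :=
              Finset.sum_congr rfl fun i _ => ((hSrep (c i) (hcT i)).2.2).symm
          _ = ∑ i : Fin (2*k), ∑ l ∈ Λ, (if l ∈ Srep (c i) then l else 0) := by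
              refine Finset.sum_congr rfl fun i _ => ?_
              rw [Finset.sum_ite_mem, Finset.inter_eq_right.mpr (hSrep (c i) (hcT i)).1]
          _ = ∑ l ∈ Λ, ∑ i : Fin (2*k), (if l ∈ Srep (c i) then l else 0) := Finset.sum_comm
          _ = ∑ l ∈ Λ, nl l • l := by
              refine Finset.sum_congr rfl fun l _ => ?_
              simp only [hnldef]
              rw [← Finset.sum_filter, Finset.sum_const]
      have hcond_eq : ((fun w => ∑ i, (c i) w) = (0 : Fin n → ZMod 2))
          ↔ (∑ i, c i) = 0 := by
        constructor
        · intro hfn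
          funext w
          rw [Finset.sum_apply]
          exact congrFun hfn w
        · intro hs
          funext w
          have := congrFun hs w
          rw [Finset.sum_apply] at this
          exact this
      constructor
      · intro h0
        have hsum0 : (∑ i, c i) = 0 := hcond_eq.mp h0
        set D := Λ.filter (fun l => ¬ Even (nl l)) with hDdef
        have hDsum : ∑ l ∈ D, l = 0 := by
          have hsplit := Finset.sum_filter_add_sum_filter_not Λ
            (fun l => Even (nl l)) (fun l => nl l • l)
          have hev : ∑ l ∈ Λ.filter (fun l => Even (nl l)), nl l • l = 0 :=
            Finset.sum_eq_zero fun l hl => heven_smul _ _ (Finset.mem_filter.mp hl).2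
          have hodd : ∑ l ∈ D, nl l • l = ∑ l ∈ D, l := by
            refine Finset.sum_congr rfl fun l hl => ?_
            have hno : ¬ Even (nl l) := (Finset.mem_filter.mp hl).2
            obtain ⟨p, hp⟩ := Nat.not_even_iff_odd.mp hno
            rw [hp, add_nsmul, one_nsmul, heven_smul (2*p) l (even_two_mul p), zero_add]
          have htot : ∑ l ∈ Λ, nl l • l = 0 := by rw [← hsum_repr]; exact hsum0
          rw [← hodd]
          calc ∑ l ∈ D, nl l • l
              = ∑ l ∈ Λ.filter (fun l => Even (nl l)), nl l • l + ∑ l ∈ D, nl l • l := by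
                rw [hev, zero_add]
            _ = ∑ l ∈ Λ, nl l • l := hsplit
            _ = 0 := htot
        have hnl_sum : ∑ l ∈ Λ, nl l = 2*k*d := by
          calc ∑ l ∈ Λ, nl l
              = ∑ l ∈ Λ, ∑ i : Fin (2*k), (if l ∈ Srep (c i) then 1 else 0) := by
                refine Finset.sum_congr rfl fun l _ => ?_
                simp only [hnldef]
                rw [Finset.card_filter]
            _ = ∑ i : Fin (2*k), ∑ l ∈ Λ, (if l ∈ Srep (c i) then 1 else 0) :=
                Finset.sum_comm
            _ = ∑ i : Fin (2*k), (Srep (c i)).card := by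
                refine Finset.sum_congr rfl fun i _ => ?_
                rw [Finset.sum_ite_mem, Finset.inter_eq_right.mpr (hSrep (c i) (hcT i)).1,
                  Finset.sum_const, smul_eq_mul, mul_one]
            _ = ∑ _i : Fin (2*k), d :=
                Finset.sum_congr rfl fun i _ => (hSrep (c i) (hcT i)).2.1
            _ = 2*k*d := by
                rw [Finset.sum_const, Finset.card_univ, Fintype.card_fin, smul_eq_mul]
        have hDcard : ((D.card : ℕ) : ℝ) ≤ 2 * L := by
          have h1 : D.card ≤ ∑ l ∈ D, nl l := by
            rw [Finset.card_eq_sum_ones]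
            refine Finset.sum_le_sum fun l hl => ?_
            have hno : ¬ Even (nl l) := (Finset.mem_filter.mp hl).2
            rcases Nat.eq_zero_or_pos (nl l) with h0' | h0'
            · exact absurd (h0' ▸ Even.zero) hno
            · exact h0'
          have h2 : ∑ l ∈ D, nl l ≤ ∑ l ∈ Λ, nl l :=
            Finset.sum_le_sum_of_subset (Finset.filter_subset _ _)
          have h3 : ((D.card : ℕ) : ℝ) ≤ ((2*k*d : ℕ) : ℝ) := by
            exact_mod_cast le_trans h1 (le_trans h2 (le_of_eq hnl_sum))
          refine le_trans h3 ?_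
          push_cast
          nlinarith [hkd]
        have hDempty : D = ∅ := by
          by_contra hne
          exact hΛ D (Finset.filter_subset _ _) (Finset.nonempty_iff_ne_empty.mpr hne)
            hDcard hDsum
        funext l
        show (∑ i, (if l ∈ Srep (c i) then (1:ZMod 2) else 0)) = 0
        rw [hμ l]
        have hev : Even (nl l) := by
          by_cases hlΛ : l ∈ Λ
          · by_contra hodd
            have hmem : l ∈ D := Finset.mem_filter.mpr ⟨hlΛ, hodd⟩
            rw [hDempty] at hmem
            exact absurd hmem (Finset.notMem_empty l)
          · have h0' : nl l = 0 := by
              simp only [hnldef]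
              rw [Finset.card_eq_zero, Finset.filter_eq_empty_iff]
              exact fun i _ hmem => hlΛ ((hSrep (c i) (hcT i)).1 hmem)
            rw [h0']
            exact Even.zero
        have hdvd : 2 ∣ nl l := by
          rw [Nat.even_iff] at hev
          omega
        exact (ZMod.natCast_eq_zero_iff (nl l) 2).mpr hdvd
      · intro h0
        rw [hcond_eq, hsum_repr]
        refine Finset.sum_eq_zero fun l _ => ?_
        refine heven_smul _ _ ?_
        have hl0 : ((nl l : ℕ) : ZMod 2) = 0 := by
          rw [← hμ l]
          exact congrFun h0 l
        have hdvd := (ZMod.natCast_eq_zero_iff (nl l) 2).mp hl0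
        rw [Nat.even_iff]
        omega
    have htrans : (2:ℝ)^(Fintype.card (Fin n → ZMod 2)) * ∑ x : Fin n → ZMod 2, (f x)^(2*k)
        = (2:ℝ)^n * ∑ y : (Fin n → ZMod 2) → ZMod 2,
            (∑ r ∈ T, σ r * wal (Srep r) y)^(2*k) := by
      have hL2 := expand_moment (W := Fin n) (2*k) T σ (fun r => r)
      have hR2 := expand_moment (W := Fin n → ZMod 2) (2*k) T σ
        (fun r => fun l => if l ∈ Srep r then (1:ZMod 2) else 0)
      have hfL : ∑ x : Fin n → ZMod 2, (f x)^(2*k)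
          = ∑ c ∈ Fintype.piFinset (fun _ : Fin (2*k) => T),
              (∏ i, σ (c i)) * (if (fun w => ∑ i, (c i) w) = 0
                then (2:ℝ)^(Fintype.card (Fin n)) else 0) := by
        simp only [hfdef]
        exact hL2
      have hfR : ∑ y : (Fin n → ZMod 2) → ZMod 2,
          (∑ r ∈ T, σ r * wal (Srep r) y)^(2*k)
          = ∑ c ∈ Fintype.piFinset (fun _ : Fin (2*k) => T),
              (∏ i, σ (c i)) *
                (if (fun l => ∑ i, (if l ∈ Srep (c i) then (1:ZMod 2) else 0)) = 0
                  then (2:ℝ)^(Fintype.card (Fin n → ZMod 2)) else 0) := by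
        rw [← hR2]
        refine Finset.sum_congr rfl fun y _ => ?_
        congr 1
        refine Finset.sum_congr rfl fun r _ => ?_
        rw [wal_eq_chi]
      rw [hfL, hfR, Finset.mul_sum, Finset.mul_sum]
      refine Finset.sum_congr rfl fun c hc => ?_
      rw [Fintype.card_fin]
      by_cases hcond : (fun w => ∑ i, (c i) w) = (0 : Fin n → ZMod 2)
      · rw [if_pos hcond, if_pos ((hiff c hc).mp hcond)]
        ring
      · rw [if_neg hcond, if_neg (fun hcc => hcond ((hiff c hc).mpr hcc))]
        ring
    have h2cv : (0:ℝ) < 2^(Fintype.card (Fin n → ZMod 2)) := by positivity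
    have hfinal : (2:ℝ)^(Fintype.card (Fin n → ZMod 2)) * ∑ x : Fin n → ZMod 2, (f x)^(2*k)
        ≤ (2:ℝ)^(Fintype.card (Fin n → ZMod 2)) * (2^n * (2*(k:ℝ))^(k*d) * (T.card:ℝ)^k) := by
      rw [htrans]
      calc (2:ℝ)^n * ∑ y : (Fin n → ZMod 2) → ZMod 2,
            (∑ r ∈ T, σ r * wal (Srep r) y)^(2*k)
          ≤ (2:ℝ)^n * (2^(Fintype.card (Fin n → ZMod 2)) * (2*(k:ℝ))^(k*d) * (T.card:ℝ)^k) :=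
            mul_le_mul_of_nonneg_left hchaos' (by positivity)
        _ = (2:ℝ)^(Fintype.card (Fin n → ZMod 2)) *
              (2^n * (2*(k:ℝ))^(k*d) * (T.card:ℝ)^k) := by ring
    exact le_of_mul_le_mul_left hfinal h2cv
  -- power mean and combination
  have heven2k : Even (2*k) := even_two_mul k
  have hf_abs_pow : ∀ x, |f x|^(2*k) = (f x)^(2*k) := fun x => heven2k.pow_abs _
  have hf_pow_nonneg : ∀ x, (0:ℝ) ≤ (f x)^(2*k) := fun x => by
    rw [pow_mul]; exact pow_nonneg (sq_nonneg _) _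
  have hcardA_pos : (0:ℝ) < A.card := by
    rw [hA]; positivity
  have hPM : (∑ x ∈ A, |f x|)^(2*k) ≤ (A.card:ℝ)^(2*k-1) * ∑ x ∈ A, (f x)^(2*k) := by
    have h := pow_sum_div_card_le_sum_pow (s := A) (f := fun x => |f x|)
      (fun x _ => abs_nonneg _) (2*k-1)
    have he : 2*k-1+1 = 2*k := by omega
    rw [he] at h
    rw [Finset.sum_congr rfl fun x _ => hf_abs_pow x] at h
    rw [div_le_iff₀ (by positivity)] at h
    calc (∑ x ∈ A, |f x|)^(2*k) ≤ (∑ x ∈ A, (f x)^(2*k)) * (A.card:ℝ)^(2*k-1) := h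
      _ = (A.card:ℝ)^(2*k-1) * ∑ x ∈ A, (f x)^(2*k) := by ring
  have hsub : ∑ x ∈ A, (f x)^(2*k) ≤ ∑ x : Fin n → ZMod 2, (f x)^(2*k) :=
    Finset.sum_le_sum_of_subset_of_nonneg (Finset.subset_univ A)
      (fun x _ _ => hf_pow_nonneg x)
  have hchain : (α * 2^n * T.card)^(2*k)
      ≤ (δ * 2^n)^(2*k-1) * (2^n * (2*(k:ℝ))^(k*d) * (T.card:ℝ)^k) := by
    have h1 : (α * 2^n * T.card)^(2*k) ≤ (∑ x ∈ A, |f x|)^(2*k) := by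
      refine pow_le_pow_left₀ (by positivity) ?_ _
      exact le_trans hlow (Finset.sum_le_sum fun x _ => le_abs_self _)
    refine le_trans h1 (le_trans hPM ?_)
    rw [← hA]
    refine mul_le_mul_of_nonneg_left (le_trans hsub hmoment) (by positivity)
  -- cancel (2^n)^(2k)
  have hmain : α^(2*k) * (T.card:ℝ)^(2*k) ≤ δ^(2*k-1) * (2*(k:ℝ))^(k*d) * (T.card:ℝ)^k := by
    have hexp : (α * 2^n * (T.card:ℝ))^(2*k)
        = α^(2*k) * (T.card:ℝ)^(2*k) * ((2:ℝ)^n)^(2*k) := by ring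
    have hexp2 : (δ * 2^n)^(2*k-1) * ((2:ℝ)^n * (2*(k:ℝ))^(k*d) * (T.card:ℝ)^k)
        = δ^(2*k-1) * (2*(k:ℝ))^(k*d) * (T.card:ℝ)^k * (((2:ℝ)^n)^(2*k-1) * (2:ℝ)^n) := by
      rw [mul_pow]; ring
    have hexp3 : ((2:ℝ)^n)^(2*k-1) * (2:ℝ)^n = ((2:ℝ)^n)^(2*k) := by
      rw [← pow_succ]
      congr 1
      omega
    rw [hexp, hexp2, hexp3] at hchain
    exact le_of_mul_le_mul_right hchain (by positivity)
  -- divide by t^k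
  have ht2k : (T.card:ℝ)^(2*k) = (T.card:ℝ)^k * (T.card:ℝ)^k := by
    rw [← pow_add, two_mul]
  have hmain2 : α^(2*k) * (T.card:ℝ)^k ≤ δ^(2*k-1) * (2*(k:ℝ))^(k*d) := by
    have h := hmain
    rw [ht2k, ← mul_assoc] at h
    exact le_of_mul_le_mul_right h (by positivity)
  -- numerics
  have hδsplit : δ^(2*k-1) = δ^(2*k) * (1/δ) := by
    have h1 : δ^(2*k-1) * δ = δ^(2*k) := by
      rw [← pow_succ]
      congr 1
      omega
    field_simp
    linarith [h1]
  have hfin : (T.card:ℝ)^k ≤ ((δ/α)^2 * ((8:ℝ)*k)^d)^k := by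
    have h1 : α^(2*k) * (T.card:ℝ)^k ≤ δ^(2*k) * (4:ℝ)^(d*k) * (2*(k:ℝ))^(k*d) := by
      refine le_trans hmain2 ?_
      rw [hδsplit]
      exact mul_le_mul_of_nonneg_right
        (mul_le_mul_of_nonneg_left hδ4 (by positivity)) (by positivity)
    have h2 : ((δ/α)^2 * ((8:ℝ)*k)^d)^k
        = δ^(2*k) * (4:ℝ)^(d*k) * (2*(k:ℝ))^(k*d) / α^(2*k) := by
      rw [mul_pow, ← pow_mul, ← pow_mul, div_pow]
      have h8 : ((8:ℝ)*k)^(d*k) = (4:ℝ)^(d*k) * (2*(k:ℝ))^(d*k) := by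
        rw [← mul_pow]
        congr 1
        ring
      have h9 : (2*(k:ℝ))^(d*k) = (2*(k:ℝ))^(k*d) := by rw [mul_comm d k]
      rw [h8, h9]
      ring
    rw [h2, le_div_iff₀ (by positivity : (0:ℝ) < α^(2*k))]
    calc (T.card:ℝ)^k * α^(2*k) = α^(2*k) * (T.card:ℝ)^k := by ring
      _ ≤ δ^(2*k) * (4:ℝ)^(d*k) * (2*(k:ℝ))^(k*d) := h1
  have ht : (T.card:ℝ) ≤ (δ/α)^2 * ((8:ℝ)*k)^d := by
    refine le_of_pow_le_pow_left₀ (Nat.pos_iff_ne_zero.mp hkpos) (by positivity) hfin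
  refine le_trans ht ?_
  refine mul_le_mul_of_nonneg_left ?_ (sq_nonneg _)
  refine pow_le_pow_left₀ (by positivity) ?_ d
  calc (8:ℝ)*k ≤ 8*(L/d) := mul_le_mul_of_nonneg_left hkreal (by norm_num)
    _ ≤ 2^12 * (L/d) := mul_le_mul_of_nonneg_right (by norm_num) (by positivity)
    _ = 2^12 * L / d := by ring
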